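/- Let N ⊆ M_d(ℂ) be a unital *-subalgebra, E : M_d(ℂ) → N the trace-preserving conditional expectation onto N, and σ, ρ positive definite states on M_d(ℂ). Then ρ = σ σ_N^{−1} ρ_N if and only if σ^{1/2} σ_N^{−1/2} Γ_N^{1/2} σ_N^{1/2} = Γ^{1/2} σ^{1/2}. -/

import Mathlib

open Matrix MeasureTheory Filter Topology Kronecker ComplexOrder

/-- Apply a real function to a matrix via the functional calculus for Hermitian
matrices (and return `0` on non-Hermitian input). -/
noncomputable def mfun {d : ℕ} (f : ℝ → ℝ) (A : Matrix (Fin d) (Fin d) ℂ) :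
    Matrix (Fin d) (Fin d) ℂ :=
  if hA : A.IsHermitian then hA.cfc f else 0

/-- Square root of a Hermitian positive semidefinite matrix. -/
noncomputable def msqrt {d : ℕ} (A : Matrix (Fin d) (Fin d) ℂ) : Matrix (Fin d) (Fin d) ℂ :=
  mfun Real.sqrt A

/-- Inverse square root of a Hermitian positive semidefinite matrix (Moore–Penrose
pseudoinverse of the square root in the singular case, since `(0 : ℝ)⁻¹ = 0`). -/
noncomputable def misqrt {d : ℕ} (A : Matrix (Fin d) (Fin d) ℂ) : Matrix (Fin d) (Fin d) ℂ :=
  mfun (fun x => (Real.sqrt x)⁻¹) A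

/-- Inverse of a Hermitian matrix (Moore–Penrose pseudoinverse in the singular case). -/
noncomputable def minv {d : ℕ} (A : Matrix (Fin d) (Fin d) ℂ) : Matrix (Fin d) (Fin d) ℂ :=
  mfun (fun x => x⁻¹) A

/-- Logarithm of a positive definite matrix. -/
noncomputable def mlog {d : ℕ} (A : Matrix (Fin d) (Fin d) ℂ) : Matrix (Fin d) (Fin d) ℂ :=
  mfun Real.log A

/-- Frobenius (Schatten-2) norm ‖A‖₂ = tr(AᴴA)^(1/2). -/
noncomputable def frob {n : Type*} [Fintype n] (A : Matrix n n ℂ) : ℝ :=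
  Real.sqrt (Matrix.trace (Aᴴ * A)).re

/-- Operator norm ‖A‖∞ of a matrix, acting on the Euclidean space ℂᵈ. -/
noncomputable def opNorm {n : Type*} [Fintype n] [DecidableEq n] (A : Matrix n n ℂ) : ℝ :=
  ‖LinearMap.toContinuousLinearMap (Matrix.toEuclideanLin A)‖

/-- The Belavkin–Staszewski relative entropy
`Ŝ_BS(σ‖ρ) = −tr[σ log(σ^{−1/2} ρ σ^{−1/2})]`. -/
noncomputable def BS {d : ℕ} (σ ρ : Matrix (Fin d) (Fin d) ℂ) : ℝ :=
  -(Matrix.trace (σ * mlog (misqrt σ * ρ * misqrt σ))).re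

/-- The maximal f-divergence `Ŝ_f(σ‖ρ) = tr[ρ^{1/2} f(ρ^{−1/2} σ ρ^{−1/2}) ρ^{1/2}]`. -/
noncomputable def hatS {d : ℕ} (f : ℝ → ℝ) (σ ρ : Matrix (Fin d) (Fin d) ℂ) : ℝ :=
  (Matrix.trace (msqrt ρ * mfun f (misqrt ρ * σ * misqrt ρ) * msqrt ρ)).re

/-- The Umegaki relative entropy `D(σ‖ρ) = tr[σ (log σ − log ρ)]`. -/
noncomputable def relEnt {d : ℕ} (σ ρ : Matrix (Fin d) (Fin d) ℂ) : ℝ :=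
  (Matrix.trace (σ * (mlog σ - mlog ρ))).re

/-- The Choi matrix of a linear map between matrix algebras. -/
noncomputable def choi {d₁ d₂ : ℕ} (T : Matrix (Fin d₁) (Fin d₁) ℂ →ₗ[ℂ] Matrix (Fin d₂) (Fin d₂) ℂ) :
    Matrix (Fin d₁ × Fin d₂) (Fin d₁ × Fin d₂) ℂ :=
  Matrix.of fun p q => T (Matrix.single p.1 q.1 1) p.2 q.2

/-- A quantum channel: a completely positive (equivalently, with positive semidefinite Choi
matrix) trace-preserving linear map. -/
def IsCPTP {d₁ d₂ : ℕ} (T : Matrix (Fin d₁) (Fin d₁) ℂ →ₗ[ℂ] Matrix (Fin d₂) (Fin d₂) ℂ) :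
    Prop :=
  (choi T).PosSemidef ∧ ∀ A, (T A).trace = A.trace

/-- Partial trace over the second tensor factor. -/
noncomputable def ptrace2 {d₂ s : ℕ} (M : Matrix (Fin d₂ × Fin s) (Fin d₂ × Fin s) ℂ) :
    Matrix (Fin d₂) (Fin d₂) ℂ :=
  Matrix.of fun i j => ∑ k : Fin s, M (i, k) (j, k)

/-- The Loewner order: `A ≤ B` iff `B - A` is positive semidefinite. -/
def Loewner {n : ℕ} (A B : Matrix (Fin n) (Fin n) ℂ) : Prop := (B - A).PosSemidef

/-- A function `f : (0,∞) → ℝ` is operator convex. -/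
def OperatorConvex (f : ℝ → ℝ) : Prop :=
  ∀ (n : ℕ) (A B : Matrix (Fin n) (Fin n) ℂ), A.PosDef → B.PosDef →
    ∀ t : ℝ, 0 ≤ t → t ≤ 1 →
      Loewner (mfun f ((t : ℂ) • A + ((1 - t : ℝ) : ℂ) • B))
        ((t : ℂ) • mfun f A + ((1 - t : ℝ) : ℂ) • mfun f B)

/-- A function `f : (0,∞) → ℝ` is operator monotone decreasing. -/
def OperatorAntitone (f : ℝ → ℝ) : Prop :=
  ∀ (n : ℕ) (A B : Matrix (Fin n) (Fin n) ℂ), A.PosDef → B.PosDef →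
    Loewner A B → Loewner (mfun f B) (mfun f A)

namespace StmtAux

variable {d : ℕ}

section cfcAPI

variable {A : Matrix (Fin d) (Fin d) ℂ} (hA : A.IsHermitian)

lemma star_mul_selfU : star (hA.eigenvectorUnitary : Matrix (Fin d) (Fin d) ℂ) *
    (hA.eigenvectorUnitary : Matrix (Fin d) (Fin d) ℂ) = 1 :=
  (Matrix.mem_unitaryGroup_iff').mp hA.eigenvectorUnitary.2

lemma mul_self_starU : (hA.eigenvectorUnitary : Matrix (Fin d) (Fin d) ℂ) *
    star (hA.eigenvectorUnitary : Matrix (Fin d) (Fin d) ℂ) = 1 :=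
  (Matrix.mem_unitaryGroup_iff).mp hA.eigenvectorUnitary.2

lemma cfc_mul' (f g : ℝ → ℝ) :
    hA.cfc f * hA.cfc g = hA.cfc (fun x => f x * g x) := by
  simp only [Matrix.IsHermitian.cfc, Unitary.conjStarAlgAut_apply, Unitary.coe_star]
  have hdd : Matrix.diagonal ((RCLike.ofReal ∘ f ∘ hA.eigenvalues : Fin d → ℂ)) *
      Matrix.diagonal ((RCLike.ofReal ∘ g ∘ hA.eigenvalues : Fin d → ℂ)) =
      Matrix.diagonal ((RCLike.ofReal ∘ (fun x => f x * g x) ∘ hA.eigenvalues : Fin d → ℂ)) := by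
    rw [Matrix.diagonal_mul_diagonal, Matrix.diagonal_eq_diagonal_iff]
    intro i
    simp [Function.comp]
  simp only [mul_assoc]
  rw [← mul_assoc (star (hA.eigenvectorUnitary : Matrix (Fin d) (Fin d) ℂ))
    (hA.eigenvectorUnitary : Matrix (Fin d) (Fin d) ℂ), star_mul_selfU hA, one_mul,
    ← mul_assoc (Matrix.diagonal _) (Matrix.diagonal _), hdd]

lemma cfc_congr' {f g : ℝ → ℝ} (h : ∀ i, f (hA.eigenvalues i) = g (hA.eigenvalues i)) :
    hA.cfc f = hA.cfc g := by
  simp only [Matrix.IsHermitian.cfc]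
  have : ((RCLike.ofReal ∘ f ∘ hA.eigenvalues : Fin d → ℂ))
      = ((RCLike.ofReal ∘ g ∘ hA.eigenvalues : Fin d → ℂ)) := by
    funext i; simp [Function.comp, h i]
  rw [this]

lemma cfc_one' : hA.cfc (fun _ => 1) = 1 := by
  simp only [Matrix.IsHermitian.cfc, Unitary.conjStarAlgAut_apply, Unitary.coe_star]
  have : ((RCLike.ofReal ∘ (fun _ : ℝ => (1:ℝ)) ∘ hA.eigenvalues) : Fin d → ℂ)
      = fun _ => (1 : ℂ) := by funext i; simp [Function.comp]
  rw [this, Matrix.diagonal_one, mul_one, mul_self_starU hA]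

lemma cfc_id' : hA.cfc (fun x => x) = A := by
  simp only [Matrix.IsHermitian.cfc]
  exact (hA.spectral_theorem).symm

lemma cfc_hermitian (f : ℝ → ℝ) : (hA.cfc f).IsHermitian := by
  simp only [Matrix.IsHermitian.cfc, Matrix.star_eq_conjTranspose]
  apply Matrix.isHermitian_mul_mul_conjTranspose
  apply Matrix.isHermitian_diagonal_of_self_adjoint
  funext i
  simp [Function.comp, Pi.star_apply, Complex.conj_ofReal]

lemma cfc_posSemidef {f : ℝ → ℝ} (h : ∀ i, 0 ≤ f (hA.eigenvalues i)) :
    (hA.cfc f).PosSemidef := by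
  simp only [Matrix.IsHermitian.cfc, Unitary.conjStarAlgAut_apply, Unitary.coe_star]
  rw [Matrix.star_eq_conjTranspose]
  apply Matrix.PosSemidef.mul_mul_conjTranspose_same
  rw [Matrix.posSemidef_diagonal_iff]
  intro i
  exact Complex.zero_le_real.mpr (h i)

lemma diagonal_comm_of {v w : Fin d → ℂ} (hvw : ∀ i j, v i = v j → w i = w j)
    {M : Matrix (Fin d) (Fin d) ℂ} (h : M * Matrix.diagonal v = Matrix.diagonal v * M) :
    M * Matrix.diagonal w = Matrix.diagonal w * M := by
  ext i j
  have h' : M i j * v j = v i * M i j := by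
    have := Matrix.ext_iff.mpr h i j
    rwa [Matrix.mul_diagonal, Matrix.diagonal_mul] at this
  rw [Matrix.mul_diagonal, Matrix.diagonal_mul]
  by_cases hM : M i j = 0
  · simp [hM]
  · have hv : v j = v i := by
      rw [mul_comm] at h'
      exact mul_right_cancel₀ hM h'
    rw [hvw j i hv, mul_comm]

lemma cfc_commute {B : Matrix (Fin d) (Fin d) ℂ} (hAB : B * A = A * B) (f : ℝ → ℝ) :
    B * hA.cfc f = hA.cfc f * B := by
  simp only [Matrix.IsHermitian.cfc]
  set U : Matrix (Fin d) (Fin d) ℂ := (hA.eigenvectorUnitary : Matrix (Fin d) (Fin d) ℂ) with hU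
  have hUU : star U * U = 1 := star_mul_selfU hA
  have hUU' : U * star U = 1 := mul_self_starU hA
  set D : Matrix (Fin d) (Fin d) ℂ :=
    Matrix.diagonal ((RCLike.ofReal ∘ hA.eigenvalues) : Fin d → ℂ) with hD
  set Df : Matrix (Fin d) (Fin d) ℂ :=
    Matrix.diagonal ((RCLike.ofReal ∘ f ∘ hA.eigenvalues) : Fin d → ℂ) with hDf
  set M : Matrix (Fin d) (Fin d) ℂ := star U * B * U with hM
  have hUM : U * M = B * U := by
    rw [hM]; simp only [← mul_assoc]; rw [hUU', one_mul]
  have hMU : M * star U = star U * B := by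
    rw [hM]; simp only [mul_assoc]; rw [hUU', mul_one]
  have hspec : A = U * D * star U := hA.spectral_theorem
  have hcancel : ∀ X : Matrix (Fin d) (Fin d) ℂ, star U * (U * X * star U) * U = X := by
    intro X
    calc star U * (U * X * star U) * U = (star U * U) * X * (star U * U) := by
          simp only [mul_assoc]
      _ = X := by rw [hUU, one_mul, mul_one]
  have hMD : M * D = D * M := by
    have h2 : U * (M * D) * star U = U * (D * M) * star U := by
      calc U * (M * D) * star U = (U * M) * (D * star U) := by simp only [mul_assoc]
        _ = B * (U * D * star U) := by rw [hUM]; simp only [mul_assoc]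
        _ = B * A := by rw [← hspec]
        _ = A * B := hAB
        _ = (U * D) * (star U * B) := by rw [hspec]; simp only [mul_assoc]
        _ = (U * D) * (M * star U) := by rw [hMU]
        _ = U * (D * M) * star U := by simp only [mul_assoc]
    rw [← hcancel (M * D), h2, hcancel]
  have hMDf : M * Df = Df * M := by
    rw [hD] at hMD
    rw [hDf]
    apply diagonal_comm_of (v := ((RCLike.ofReal ∘ hA.eigenvalues) : Fin d → ℂ)) _ hMD
    intro i j hij
    have h3 : hA.eigenvalues i = hA.eigenvalues j := by
      simpa using hij
    simp [Function.comp, h3]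
  calc B * (U * Df * star U) = (B * U) * (Df * star U) := by simp only [mul_assoc]
    _ = (U * M) * (Df * star U) := by rw [hUM]
    _ = U * (M * Df) * star U := by simp only [mul_assoc]
    _ = U * (Df * M) * star U := by rw [hMDf]
    _ = (U * Df) * (M * star U) := by simp only [mul_assoc]
    _ = (U * Df) * (star U * B) := by rw [hMU]
    _ = U * Df * star U * B := by simp only [mul_assoc]

end cfcAPI

section msqrtAPI

variable {A : Matrix (Fin d) (Fin d) ℂ}

lemma mfun_eq (hA : A.IsHermitian) (f : ℝ → ℝ) : mfun f A = hA.cfc f := dif_pos hA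

lemma msqrt_eq (hA : A.IsHermitian) : msqrt A = hA.cfc Real.sqrt := mfun_eq hA _

lemma misqrt_eq (hA : A.IsHermitian) : misqrt A = hA.cfc (fun x => (Real.sqrt x)⁻¹) :=
  mfun_eq hA _

lemma msqrt_posSemidef (hA : A.PosSemidef) : (msqrt A).PosSemidef := by
  rw [msqrt_eq hA.1]
  exact cfc_posSemidef hA.1 (fun i => Real.sqrt_nonneg _)

lemma msqrt_mul_self (hA : A.PosSemidef) : msqrt A * msqrt A = A := by
  rw [msqrt_eq hA.1, cfc_mul' hA.1]
  rw [cfc_congr' hA.1 (g := fun x => x)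
    (fun i => Real.mul_self_sqrt (hA.eigenvalues_nonneg i)), cfc_id' hA.1]

lemma misqrt_hermitian (hA : A.IsHermitian) : (misqrt A).IsHermitian := by
  rw [misqrt_eq hA]; exact cfc_hermitian hA _

lemma msqrt_mul_misqrt (hA : A.PosDef) : msqrt A * misqrt A = 1 := by
  rw [msqrt_eq hA.1, misqrt_eq hA.1, cfc_mul' hA.1]
  rw [cfc_congr' hA.1 (g := fun _ => 1)
    (fun i => mul_inv_cancel₀ (Real.sqrt_pos.mpr (hA.eigenvalues_pos i)).ne'), cfc_one' hA.1]

lemma misqrt_mul_msqrt (hA : A.PosDef) : misqrt A * msqrt A = 1 := by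
  rw [msqrt_eq hA.1, misqrt_eq hA.1, cfc_mul' hA.1]
  rw [cfc_congr' hA.1 (g := fun _ => 1)
    (fun i => inv_mul_cancel₀ (Real.sqrt_pos.mpr (hA.eigenvalues_pos i)).ne'), cfc_one' hA.1]

lemma misqrt_mul_misqrt (hA : A.PosDef) : misqrt A * misqrt A = minv A := by
  rw [misqrt_eq hA.1, cfc_mul' hA.1, minv, mfun_eq hA.1]
  apply cfc_congr' hA.1
  intro i
  rw [← mul_inv, Real.mul_self_sqrt (hA.eigenvalues_pos i).le]

lemma cfc_const_smul_one (hA : A.IsHermitian) (c : ℝ) :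
    hA.cfc (fun _ => c) = (c : ℂ) • 1 := by
  simp only [Matrix.IsHermitian.cfc, Unitary.conjStarAlgAut_apply, Unitary.coe_star]
  have h1 : Matrix.diagonal ((RCLike.ofReal ∘ (fun _ : ℝ => c) ∘ hA.eigenvalues) : Fin d → ℂ)
      = (c : ℂ) • 1 := by
    ext i j
    by_cases h : i = j <;> simp [Matrix.diagonal_apply, Matrix.one_apply, h, Function.comp]
  rw [h1, Matrix.mul_smul, mul_one, Matrix.smul_mul, mul_self_starU hA]

lemma cfc_sub' (hA : A.IsHermitian) (f g : ℝ → ℝ) :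
    hA.cfc (fun x => f x - g x) = hA.cfc f - hA.cfc g := by
  simp only [Matrix.IsHermitian.cfc, Unitary.conjStarAlgAut_apply, Unitary.coe_star]
  have h1 : Matrix.diagonal ((RCLike.ofReal ∘ (fun x => f x - g x) ∘ hA.eigenvalues) : Fin d → ℂ)
      = Matrix.diagonal ((RCLike.ofReal ∘ f ∘ hA.eigenvalues) : Fin d → ℂ)
        - Matrix.diagonal ((RCLike.ofReal ∘ g ∘ hA.eigenvalues) : Fin d → ℂ) := by
    rw [Matrix.diagonal_sub, Matrix.diagonal_eq_diagonal_iff]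
    intro i
    simp [Function.comp]
  rw [h1, Matrix.mul_sub, Matrix.sub_mul]

lemma exists_sub_smul_posSemidef (hA : A.PosDef) (hd : 0 < d) :
    ∃ ε : ℝ, 0 < ε ∧ (A - (ε : ℂ) • 1).PosSemidef := by
  haveI : Nonempty (Fin d) := ⟨⟨0, hd⟩⟩
  refine ⟨Finset.univ.inf' Finset.univ_nonempty hA.1.eigenvalues, ?_, ?_⟩
  · rw [Finset.lt_inf'_iff]
    exact fun i _ => hA.eigenvalues_pos i
  · have h1 : hA.1.cfc (fun x => x - Finset.univ.inf' Finset.univ_nonempty hA.1.eigenvalues)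
        = A - ((Finset.univ.inf' Finset.univ_nonempty hA.1.eigenvalues : ℝ) : ℂ) • 1 := by
      rw [cfc_sub' hA.1 (fun x => x) _, cfc_id' hA.1, cfc_const_smul_one hA.1]
    rw [← h1]
    apply cfc_posSemidef hA.1
    intro i
    exact sub_nonneg.mpr (Finset.inf'_le _ (Finset.mem_univ i))

lemma posDef_smul_one {c : ℝ} (hc : 0 < c) :
    ((c : ℂ) • (1 : Matrix (Fin d) (Fin d) ℂ)).PosDef := by
  have h1 : (c : ℂ) • (1 : Matrix (Fin d) (Fin d) ℂ)
      = Matrix.diagonal (fun _ => (c : ℂ)) := by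
    ext i j
    by_cases h : i = j <;> simp [Matrix.diagonal_apply, Matrix.one_apply, h]
  rw [h1, Matrix.posDef_diagonal_iff]
  intro i
  exact_mod_cast Complex.real_lt_real.mpr hc

end msqrtAPI

end StmtAux

open StmtAux

theorem stmt5 {d : ℕ}
    (N : Subalgebra ℂ (Matrix (Fin d) (Fin d) ℂ))
    (hNstar : ∀ A ∈ N, Aᴴ ∈ N)
    (E : Matrix (Fin d) (Fin d) ℂ →ₗ[ℂ] Matrix (Fin d) (Fin d) ℂ)
    (hEpos : ∀ A : Matrix (Fin d) (Fin d) ℂ, A.PosSemidef → (E A).PosSemidef)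
    (hEmem : ∀ A : Matrix (Fin d) (Fin d) ℂ, E A ∈ N)
    (hEfix : ∀ B ∈ N, E B = B)
    (hEmod : ∀ (A : Matrix (Fin d) (Fin d) ℂ), ∀ B ∈ N, E (A * B) = E A * B)
    (hEtr : ∀ A : Matrix (Fin d) (Fin d) ℂ, (E A).trace = A.trace)
    (σ ρ : Matrix (Fin d) (Fin d) ℂ)
    (hσ : σ.PosDef) (hσtr : σ.trace = 1)
    (hρ : ρ.PosDef) (hρtr : ρ.trace = 1) :
    ρ = σ * minv (E σ) * E ρ ↔
      msqrt σ * misqrt (E σ) * msqrt (misqrt (E σ) * E ρ * misqrt (E σ)) * msqrt (E σ) =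
        msqrt (misqrt σ * ρ * misqrt σ) * msqrt σ := by
  rcases Nat.eq_zero_or_pos d with hd | hd
  · subst hd
    constructor <;> intro _ <;> (ext i j; exact i.elim0)
  -- E σ is positive definite
  set sN := E σ with hsNdef
  set rN := E ρ with hrNdef
  have hsN : sN.PosDef := by
    obtain ⟨ε, hε, hPSD⟩ := exists_sub_smul_posSemidef hσ hd
    have h1 : E ((ε : ℂ) • 1) = (ε : ℂ) • 1 := by
      rw [E.map_smul, hEfix 1 (one_mem N)]
    have h2 : sN = E (σ - (ε : ℂ) • 1) + (ε : ℂ) • 1 := by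
      rw [E.map_sub, h1, hsNdef, sub_add_cancel]
    rw [h2]
    exact Matrix.PosDef.posSemidef_add (hEpos _ hPSD) (posDef_smul_one hε)
  have hrN : rN.PosSemidef := hEpos ρ hρ.posSemidef
  have hrNherm : rNᴴ = rN := hrN.1
  -- abbreviations
  set a := msqrt σ with hadef
  set a' := misqrt σ with ha'def
  set b := msqrt sN with hbdef
  set b' := misqrt sN with hb'def
  have haa' : a * a' = 1 := msqrt_mul_misqrt hσ
  have ha'a : a' * a = 1 := misqrt_mul_msqrt hσ
  have hbb' : b * b' = 1 := msqrt_mul_misqrt hsN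
  have hb'b : b' * b = 1 := misqrt_mul_msqrt hsN
  have haa : a * a = σ := msqrt_mul_self hσ.posSemidef
  have hminv : b' * b' = minv sN := misqrt_mul_misqrt hsN
  have haherm : aᴴ = a := (msqrt_posSemidef hσ.posSemidef).1
  have ha'herm : a'ᴴ = a' := misqrt_hermitian hσ.1
  have hbherm : bᴴ = b := (msqrt_posSemidef hsN.posSemidef).1
  have hb'herm : b'ᴴ = b' := misqrt_hermitian hsN.1
  -- cancellation lemmas
  have ca : ∀ Z : Matrix (Fin d) (Fin d) ℂ, a * (a' * Z) = Z := fun Z => by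
    rw [← mul_assoc, haa', one_mul]
  have ca' : ∀ Z : Matrix (Fin d) (Fin d) ℂ, a' * (a * Z) = Z := fun Z => by
    rw [← mul_assoc, ha'a, one_mul]
  have cb : ∀ Z : Matrix (Fin d) (Fin d) ℂ, b * (b' * Z) = Z := fun Z => by
    rw [← mul_assoc, hbb', one_mul]
  have cb' : ∀ Z : Matrix (Fin d) (Fin d) ℂ, b' * (b * Z) = Z := fun Z => by
    rw [← mul_assoc, hb'b, one_mul]
  -- Γ_N and its square root
  have hΓN : (b' * rN * b').PosSemidef := by
    have := hrN.mul_mul_conjTranspose_same b'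
    rwa [hb'herm] at this
  set GN := msqrt (b' * rN * b') with hGNdef
  have hGNpsd : GN.PosSemidef := msqrt_posSemidef hΓN
  have hGNherm : GNᴴ = GN := hGNpsd.1
  have hGNGN : GN * GN = b' * rN * b' := msqrt_mul_self hΓN
  have hGN2 : ∀ Z : Matrix (Fin d) (Fin d) ℂ, GN * (GN * Z) = b' * (rN * (b' * Z)) :=
    fun Z => by rw [← mul_assoc, hGNGN]; simp only [mul_assoc]
  -- Γ and its square root
  have hΓ : (a' * ρ * a').PosSemidef := by
    have := hρ.posSemidef.mul_mul_conjTranspose_same a'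
    rwa [ha'herm] at this
  set G := msqrt (a' * ρ * a') with hGdef
  have hGpsd : G.PosSemidef := msqrt_posSemidef hΓ
  have hGG : G * G = a' * ρ * a' := msqrt_mul_self hΓ
  constructor
  · -- forward direction
    intro hρeq
    have hρeq' : ρ = a * (a * (b' * (b' * rN))) := by
      rw [hρeq, ← haa, ← hminv]; simp only [mul_assoc]
    have hΓe : a' * ρ * a' = a * (b' * (b' * (rN * a'))) := by
      rw [hρeq']
      simp only [mul_assoc, ca, ca', cb, cb']
    have hsym' : a' * (rN * (b' * (b' * a))) = a * (b' * (b' * (rN * a'))) := by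
      have h0 : (a * (b' * (b' * (rN * a'))))ᴴ = a * (b' * (b' * (rN * a'))) := by
        rw [← hΓe]; exact hΓ.1
      calc a' * (rN * (b' * (b' * a)))
          = (a * (b' * (b' * (rN * a'))))ᴴ := by
            simp only [Matrix.conjTranspose_mul, haherm, ha'herm, hb'herm, hrNherm, mul_assoc]
        _ = a * (b' * (b' * (rN * a'))) := h0
    have hsym2 : ∀ Z : Matrix (Fin d) (Fin d) ℂ,
        a' * (rN * (b' * (b' * (a * Z)))) = a * (b' * (b' * (rN * (a' * Z)))) := by
      intro Z
      have := congrArg (· * Z) hsym'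
      simpa only [mul_assoc] using this
    set P := b' * (a * (a * b')) with hPdef
    have hPΓN : P * (b' * rN * b') = (b' * rN * b') * P := by
      calc P * (b' * rN * b')
          = (b' * a) * (a * (b' * (b' * (rN * a')))) * (a * b') := by
            simp only [hPdef, mul_assoc, ca, ca', cb, cb', hbb', hb'b, haa', ha'a, mul_one,
              one_mul]
        _ = (b' * a) * (a' * (rN * (b' * (b' * a)))) * (a * b') := by rw [hsym']
        _ = (b' * rN * b') * P := by
            simp only [hPdef, mul_assoc, ca, ca', cb, cb', hbb', hb'b, haa', ha'a, mul_one,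
              one_mul]
    have hPGN : P * GN = GN * P := by
      rw [hGNdef, msqrt_eq hΓN.1]
      exact cfc_commute hΓN.1 hPΓN Real.sqrt
    set Q := msqrt GN with hQdef
    have hQpsd : Q.PosSemidef := msqrt_posSemidef hGNpsd
    have hQherm : Qᴴ = Q := hQpsd.1
    have hQQ : Q * Q = GN := msqrt_mul_self hGNpsd
    have hPQ : P * Q = Q * P := by
      rw [hQdef, msqrt_eq hGNpsd.1]
      exact cfc_commute hGNpsd.1 hPGN Real.sqrt
    set R := b * (a' * (a' * b)) with hRdef
    have hRP : R * P = 1 := by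
      rw [hRdef, hPdef]
      simp only [mul_assoc, ca, ca', cb, cb', hbb', hb'b, haa', ha'a, mul_one, one_mul]
    have hPR : P * R = 1 := by
      rw [hRdef, hPdef]
      simp only [mul_assoc, ca, ca', cb, cb', hbb', hb'b, haa', ha'a, mul_one, one_mul]
    have hRQ : R * Q = Q * R := by
      calc R * Q = R * (Q * (P * R)) := by rw [hPR, mul_one]
        _ = R * (P * (Q * R)) := by rw [← mul_assoc Q P R, ← hPQ, mul_assoc P Q R]
        _ = (R * P) * (Q * R) := by rw [← mul_assoc]
        _ = Q * R := by rw [hRP, one_mul]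
    have hQ2 : ∀ Z : Matrix (Fin d) (Fin d) ℂ, Q * (Q * Z) = GN * Z := fun Z => by
      rw [← mul_assoc, hQQ]
    have hRQ2 : ∀ Z : Matrix (Fin d) (Fin d) ℂ, R * (Q * Z) = Q * (R * Z) := fun Z => by
      rw [← mul_assoc, hRQ, mul_assoc]
    set S := a * (b' * (GN * (b * a'))) with hSdef
    have hRpsd : R.PosSemidef := by
      have h1 := Matrix.posSemidef_self_mul_conjTranspose (b * a')
      have h2 : (b * a') * (b * a')ᴴ = R := by
        rw [hRdef]
        simp only [Matrix.conjTranspose_mul, ha'herm, hbherm, mul_assoc]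
      rwa [h2] at h1
    have hTpsd : (Q * R * Qᴴ).PosSemidef := hRpsd.mul_mul_conjTranspose_same Q
    have hSpsd : S.PosSemidef := by
      have h1 := hTpsd.mul_mul_conjTranspose_same (a * b')
      have h2 : (a * b') * (Q * R * Qᴴ) * (a * b')ᴴ = S := by
        rw [hSdef, hQherm]
        simp only [Matrix.conjTranspose_mul, haherm, hb'herm, mul_assoc, hRQ2, hQ2]
        rw [hRdef]
        simp only [mul_assoc, ca, ca', cb, cb', hbb', hb'b, haa', ha'a, mul_one, one_mul]
      rwa [h2] at h1
    have hSsq : S * S = a' * ρ * a' := by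
      rw [hΓe, hSdef]
      simp only [mul_assoc, hGN2, ca, ca', cb, cb', hbb', hb'b, haa', ha'a, mul_one, one_mul]
    have hSG : S = G := by
      open scoped MatrixOrder in
      calc S = CFC.sqrt (S * S) := (CFC.sqrt_unique rfl hSpsd.nonneg).symm
        _ = CFC.sqrt (G * G) := by rw [hSsq, hGG]
        _ = G := CFC.sqrt_unique rfl hGpsd.nonneg
    rw [← hSG, hSdef]
    simp only [mul_assoc, ca, ca', cb, cb', hbb', hb'b, haa', ha'a, mul_one, one_mul]
  · -- backward direction
    intro heq
    have hG' : G = a * (b' * (GN * (b * a'))) := by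
      calc G = G * a * a' := by rw [mul_assoc, haa', mul_one]
        _ = a * b' * GN * b * a' := by rw [← heq]
        _ = a * (b' * (GN * (b * a'))) := by simp only [mul_assoc]
    calc ρ = a * ((G * G) * a) := by
          rw [hGG]
          simp only [mul_assoc, ca, ca', ha'a, mul_one]
      _ = σ * minv sN * rN := by
          rw [hG', ← haa, ← hminv]
          simp only [mul_assoc, hGN2, ca, ca', cb, cb', hbb', hb'b, haa', ha'a, mul_one, one_mul]
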